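/- On U = {(x,y) ∈ ℝ² : y > 0}, the vector fields X₁ = (1,0), X₂ = (2x,y), X₃ = (x²,xy) (the class I₅, sl(2) of type III) are Hamiltonian with respect to the symplectic form ω = y^{−3} dx∧dy with Hamiltonian functions h₁ = −1/(2y²), h₂ = −x/y², h₃ = −x²/(2y²), respectively (i.e. ∂h_i/∂x = −y^{−3}·X_i² and ∂h_i/∂y = y^{−3}·X_i¹). Moreover, under the Poisson bracket {g,h}_ω = y³(∂g/∂x·∂h/∂y − ∂g/∂y·∂h/∂x) these satisfy {h₁,h₂}_ω = −2h₁, {h₁,h₃}_ω = −h₂, {h₂,h₃}_ω = −2h₃, so ⟨h₁,h₂,h₃⟩ is a Lie algebra isomorphic to sl(2). -/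

import Mathlib

namespace Stmt10

/-- Partial derivative in the x-direction. -/
noncomputable def pdx (f : ℝ × ℝ → ℝ) (p : ℝ × ℝ) : ℝ := fderiv ℝ f p (1, 0)

/-- Partial derivative in the y-direction. -/
noncomputable def pdy (f : ℝ × ℝ → ℝ) (p : ℝ × ℝ) : ℝ := fderiv ℝ f p (0, 1)

/-- Poisson bracket induced by ω = y⁻³ dx∧dy. -/
noncomputable def pbw (g h : ℝ × ℝ → ℝ) (p : ℝ × ℝ) : ℝ :=
  p.2 ^ 3 * (pdx g p * pdy h p - pdy g p * pdx h p)

/-- Domain: {y > 0}. -/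
def U : Set (ℝ × ℝ) := {p | p.2 > 0}

/-- Basis of the class I₅, sl(2) of type III. -/
def X1 : ℝ × ℝ → ℝ × ℝ := fun _ => (1, 0)
def X2 : ℝ × ℝ → ℝ × ℝ := fun p => (2 * p.1, p.2)
def X3 : ℝ × ℝ → ℝ × ℝ := fun p => (p.1 ^ 2, p.1 * p.2)

noncomputable def h1 : ℝ × ℝ → ℝ := fun p => -(1 / (2 * p.2 ^ 2))
noncomputable def h2 : ℝ × ℝ → ℝ := fun p => -(p.1 / p.2 ^ 2)
noncomputable def h3 : ℝ × ℝ → ℝ := fun p => -(p.1 ^ 2 / (2 * p.2 ^ 2))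

open ContinuousLinearMap

lemma Hsqy (p : ℝ × ℝ) : HasFDerivAt (fun q : ℝ × ℝ => q.2 ^ 2)
    ((2 * p.2) • snd ℝ ℝ ℝ) p := by
  have h := (hasFDerivAt_snd (𝕜 := ℝ) (p := p)).mul (hasFDerivAt_snd (𝕜 := ℝ) (p := p))
  have e : (fun q : ℝ × ℝ => q.2 ^ 2) = fun q => q.2 * q.2 := by ext q; ring
  rw [e]; refine h.congr_fderiv ?_; rw [two_mul, add_smul]

lemma d1 (p : ℝ × ℝ) (hy : p.2 ≠ 0) (v : ℝ × ℝ) :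
    fderiv ℝ (fun q : ℝ × ℝ => -(1 / (2 * q.2 ^ 2))) p v = v.2 / p.2 ^ 3 := by
  have h2 : (2 : ℝ) * p.2 ^ 2 ≠ 0 := by positivity
  have G := (Hsqy p).const_mul 2
  have H := ((hasDerivAt_inv h2).comp_hasFDerivAt p G).neg
  simp only [one_div]
  rw [show (fun q : ℝ × ℝ => -(2 * q.2 ^ 2)⁻¹) = (fun x => -(((fun y => y⁻¹) ∘ fun y : ℝ × ℝ => 2 * y.2 ^ 2) x)) from rfl, HasFDerivAt.fderiv (f := fun x => -(((fun y => y⁻¹) ∘ fun y : ℝ × ℝ => 2 * y.2 ^ 2) x)) H]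
  simp
  field_simp

lemma Iy2 (p : ℝ × ℝ) (hy : p.2 ≠ 0) :
    HasFDerivAt (fun q : ℝ × ℝ => (q.2 ^ 2)⁻¹)
      (-((p.2 ^ 2) ^ 2)⁻¹ • (2 * p.2) • snd ℝ ℝ ℝ) p := by
  have h2 : p.2 ^ 2 ≠ 0 := pow_ne_zero 2 hy
  exact (hasDerivAt_inv h2).comp_hasFDerivAt p (Hsqy p)

lemma d2 (p : ℝ × ℝ) (hy : p.2 ≠ 0) (v : ℝ × ℝ) :
    fderiv ℝ (fun q : ℝ × ℝ => -(q.1 / q.2 ^ 2)) p v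
      = -(v.1 / p.2 ^ 2) + 2 * p.1 * v.2 / p.2 ^ 3 := by
  have H := ((hasFDerivAt_fst (𝕜 := ℝ) (p := p)).mul (Iy2 p hy)).neg
  simp only [div_eq_mul_inv]
  rw [HasFDerivAt.fderiv (f := fun q : ℝ × ℝ => -(q.1 * (q.2 ^ 2)⁻¹)) H]
  simp
  field_simp

lemma Hsqx (p : ℝ × ℝ) : HasFDerivAt (fun q : ℝ × ℝ => q.1 ^ 2)
    ((2 * p.1) • fst ℝ ℝ ℝ) p := by
  have h := (hasFDerivAt_fst (𝕜 := ℝ) (p := p)).mul (hasFDerivAt_fst (𝕜 := ℝ) (p := p))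
  have e : (fun q : ℝ × ℝ => q.1 ^ 2) = fun q => q.1 * q.1 := by ext q; ring
  rw [e]; refine h.congr_fderiv ?_; rw [two_mul, add_smul]

lemma d3 (p : ℝ × ℝ) (hy : p.2 ≠ 0) (v : ℝ × ℝ) :
    fderiv ℝ (fun q : ℝ × ℝ => -(q.1 ^ 2 / (2 * q.2 ^ 2))) p v
      = -(p.1 * v.1 / p.2 ^ 2) + p.1 ^ 2 * v.2 / p.2 ^ 3 := by
  have h2 : (2 : ℝ) * p.2 ^ 2 ≠ 0 := by positivity
  have G := (Hsqy p).const_mul 2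
  have I := (hasDerivAt_inv h2).comp_hasFDerivAt p G
  have H := ((Hsqx p).mul I).neg
  simp only [div_eq_mul_inv]
  rw [show (fun q : ℝ × ℝ => -(q.1 ^ 2 * (2 * q.2 ^ 2)⁻¹))
    = (fun x => -(x.1 ^ 2 * ((fun y => y⁻¹) ∘ fun y : ℝ × ℝ => 2 * y.2 ^ 2) x)) from rfl, HasFDerivAt.fderiv (f := fun x : ℝ × ℝ => -(x.1 ^ 2 * ((fun y => y⁻¹) ∘ fun y : ℝ × ℝ => 2 * y.2 ^ 2) x)) H]
  simp
  field_simp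

/-- On {y > 0}, the fields X₁, X₂, X₃ of I₅ (sl(2) of type III) are Hamiltonian with
respect to ω = y⁻³ dx∧dy with Hamiltonian functions h₁, h₂, h₃, which close sl(2)
under the induced Poisson bracket. -/
theorem stmt_10 : ∀ p ∈ U,
    (pdx h1 p = -((p.2 ^ 3)⁻¹ * (X1 p).2) ∧ pdy h1 p = (p.2 ^ 3)⁻¹ * (X1 p).1) ∧
    (pdx h2 p = -((p.2 ^ 3)⁻¹ * (X2 p).2) ∧ pdy h2 p = (p.2 ^ 3)⁻¹ * (X2 p).1) ∧
    (pdx h3 p = -((p.2 ^ 3)⁻¹ * (X3 p).2) ∧ pdy h3 p = (p.2 ^ 3)⁻¹ * (X3 p).1) ∧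
    pbw h1 h2 p = -2 * h1 p ∧ pbw h1 h3 p = -h2 p ∧ pbw h2 h3 p = -2 * h3 p := by
  intro p hp
  have hy : p.2 ≠ 0 := ne_of_gt hp
  have hx1 : pdx h1 p = 0 := by
    have h := d1 p hy (1, 0); show fderiv ℝ (fun q : ℝ × ℝ => -(1 / (2 * q.2 ^ 2))) p (1, 0) = _; rw [h]; norm_num
  have hy1 : pdy h1 p = (p.2 ^ 3)⁻¹ := by
    have h := d1 p hy (0, 1); show fderiv ℝ (fun q : ℝ × ℝ => -(1 / (2 * q.2 ^ 2))) p (0, 1) = _; rw [h]; norm_num [one_div]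
  have hx2 : pdx h2 p = -(p.2 ^ 2)⁻¹ := by
    have h := d2 p hy (1, 0); show fderiv ℝ (fun q : ℝ × ℝ => -(q.1 / q.2 ^ 2)) p (1, 0) = _; rw [h]; norm_num [one_div]
  have hy2 : pdy h2 p = 2 * p.1 / p.2 ^ 3 := by
    have h := d2 p hy (0, 1); show fderiv ℝ (fun q : ℝ × ℝ => -(q.1 / q.2 ^ 2)) p (0, 1) = _; rw [h]; norm_num
  have hx3 : pdx h3 p = -(p.1 / p.2 ^ 2) := by
    have h := d3 p hy (1, 0); show fderiv ℝ (fun q : ℝ × ℝ => -(q.1 ^ 2 / (2 * q.2 ^ 2))) p (1, 0) = _; rw [h]; norm_num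
  have hy3 : pdy h3 p = p.1 ^ 2 / p.2 ^ 3 := by
    have h := d3 p hy (0, 1); show fderiv ℝ (fun q : ℝ × ℝ => -(q.1 ^ 2 / (2 * q.2 ^ 2))) p (0, 1) = _; rw [h]; norm_num
  refine ⟨⟨?_, ?_⟩, ⟨?_, ?_⟩, ⟨?_, ?_⟩, ?_, ?_, ?_⟩ <;>
    simp only [pbw, hx1, hy1, hx2, hy2, hx3, hy3, X1, X2, X3, h1, h2, h3] <;>
    field_simp <;> ring

end Stmt10
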